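/- Let G be a group acting on the right on a set X, let z ∈ X, and let i : G → X be the map i(g) = z·g. Assume there exists a G-equivariant map μ : X → G (i.e. μ(x·g) = μ(x)g for all x ∈ X, g ∈ G) with μ ∘ i = id_G. Then the restriction map i* from G-invariant Alexander–Spanier cochains on X to G-invariant Alexander–Spanier cochains on G (with G acting on itself by right translation), given by (i*φ)(g_0,…,g_q) = φ(z·g_0,…,z·g_q), is a morphism of cochain complexes and a cochain homotopy equivalence with homotopy inverse μ*: one has i* ∘ μ* = id, while μ* ∘ i* = r* with r := i ∘ μ, and δ∘K + K∘δ = r* − id for the operator K associated to r (which preserves invariant cochains). In particular i* induces an isomorphism on cohomology (ker δ / im δ) in every degree. -/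

import Mathlib

namespace Stmt1

/-- Alexander–Spanier `q`-cochains on a set `X`: all functions `X^{q+1} → ℝ`. -/
abbrev Cochain (X : Type*) (q : ℕ) := (Fin (q + 1) → X) → ℝ

/-- The Alexander–Spanier coboundary. -/
def delta {X : Type*} {q : ℕ} (φ : Cochain X q) : Cochain X (q + 1) :=
  fun x => ∑ i : Fin (q + 2), (-1 : ℝ) ^ (i : ℕ) * φ (fun j => x (i.succAbove j))

/-- Pull-back of cochains along `r : X → X`. -/
def pull {X : Type*} (r : X → X) {q : ℕ} (φ : Cochain X q) : Cochain X q :=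
  fun x => φ (fun i => r (x i))

/-- The tuple `(r x₀, …, r xⱼ, xⱼ, xⱼ₊₁, …, x_q)`. -/
def kTuple {X : Type*} (r : X → X) {q : ℕ} (x : Fin (q + 1) → X) (j : Fin (q + 1)) :
    Fin (q + 2) → X :=
  fun i =>
    if h : (i : ℕ) ≤ (j : ℕ) then r (x ⟨(i : ℕ), lt_of_le_of_lt h j.isLt⟩)
    else x ⟨(i : ℕ) - 1, by have hi := i.isLt; omega⟩

/-- The cochain homotopy operator `K` associated to `r` (`K := 0` on `0`-cochains). -/
def K {X : Type*} (r : X → X) {q : ℕ} (φ : Cochain X (q + 1)) : Cochain X q :=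
  fun x => ∑ j : Fin (q + 1), (-1 : ℝ) ^ ((j : ℕ) + 1) * φ (kTuple r x j)

variable {X G : Type*}

/-- Restriction of cochains along `i : g ↦ z·g`. -/
def iStar (act : X → G → X) (z : X) {q : ℕ} (φ : Cochain X q) : Cochain G q :=
  fun g => φ (fun k => act z (g k))

/-- Pull-back of cochains along `μ : X → G`. -/
def muStar (μ : X → G) {q : ℕ} (ψ : Cochain G q) : Cochain X q :=
  fun x => ψ (fun k => μ (x k))

/-- Invariance of a cochain under the diagonal right `G`-action on `X`. -/
def InvX (act : X → G → X) {q : ℕ} (φ : Cochain X q) : Prop :=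
  ∀ (g : G) (x : Fin (q + 1) → X), φ (fun k => act (x k) g) = φ x

/-- Invariance of a cochain on `G` under diagonal right translation. -/
def InvG [Group G] {q : ℕ} (ψ : Cochain G q) : Prop :=
  ∀ (h : G) (g : Fin (q + 1) → G), ψ (fun k => g k * h) = ψ g


section Aux
open Finset
variable {X : Type*}

/-! ### ℕ-indexed tuple operations -/

def face (i : ℕ) (y : ℕ → X) : ℕ → X := fun k => if k < i then y k else y (k+1)
def kt (r : X → X) (j : ℕ) (y : ℕ → X) : ℕ → X := fun k => if k ≤ j then r (y k) else y (k-1)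
def dt (r : X → X) (j : ℕ) (y : ℕ → X) : ℕ → X := fun k => if k < j then r (y k) else y k

lemma face_kt_of_lt (r : X → X) (y : ℕ → X) {i j : ℕ} (h : i < j) :
    face i (kt r j y) = kt r (j-1) (face i y) := by
  funext k; simp only [face, kt]
  split_ifs <;> first | rfl | omega | (congr 1 <;> omega)

lemma face_kt_eq (r : X → X) (y : ℕ → X) (j : ℕ) :
    face j (kt r j y) = dt r j y := by
  funext k; simp only [face, kt, dt]
  split_ifs <;> first | rfl | omega | (congr 1 <;> omega)

lemma face_kt_succ (r : X → X) (y : ℕ → X) (j : ℕ) :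
    face (j+1) (kt r j y) = dt r (j+1) y := by
  funext k; simp only [face, kt, dt]
  split_ifs <;> first | rfl | omega | (congr 1 <;> omega)

lemma face_kt_of_gt (r : X → X) (y : ℕ → X) {i j : ℕ} (h : j + 1 < i) :
    face i (kt r j y) = kt r j (face (i-1) y) := by
  funext k; simp only [face, kt]
  split_ifs <;> first | rfl | omega | (congr 1 <;> omega)

lemma dt_zero (r : X → X) (y : ℕ → X) : dt r 0 y = y := by
  funext k; simp [dt]

lemma split2 (g : ℕ → ℝ) {m n : ℕ} (h : m ≤ n) :
    ∑ i ∈ range n, g i = (∑ i ∈ range m, g i) + ∑ i ∈ Ico m n, g i := by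
  simp only [range_eq_Ico]
  exact (sum_Ico_consecutive g (Nat.zero_le m) h).symm

lemma split4 (g : ℕ → ℝ) {j n : ℕ} (h : j + 2 ≤ n) :
    ∑ i ∈ range n, g i
      = (∑ i ∈ range j, g i) + (g j + g (j+1)) + ∑ i ∈ Ico (j+2) n, g i := by
  rw [split2 g (show j + 2 ≤ n by omega), split2 g (show j ≤ j + 2 by omega)]
  have : ∑ i ∈ Ico j (j+2), g i = g j + g (j+1) := by
    rw [show j + 2 = (j+1) + 1 from rfl, sum_Ico_succ_top (by omega),
      sum_Ico_succ_top (by omega), Ico_self, sum_empty, zero_add]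
  rw [this]

/-! ### The key combinatorial identity -/

lemma sum_key (F : (ℕ → X) → ℝ) (r : X → X) (y : ℕ → X) (q : ℕ) :
    (∑ i ∈ range (q+2), ∑ j ∈ range (q+1), (-1:ℝ)^(i+j+1) * F (kt r j (face i y)))
      + ∑ j ∈ range (q+2), ∑ i ∈ range (q+3), (-1:ℝ)^(i+j+1) * F (face i (kt r j y))
      = F (dt r (q+2) y) - F y := by
  set a : ℕ → ℕ → ℝ := fun i j => (-1:ℝ)^(i+j+1) * F (kt r j (face i y)) with ha
  have hsplit : ∀ j ∈ range (q+2),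
      ∑ i ∈ range (q+3), (-1:ℝ)^(i+j+1) * F (face i (kt r j y))
        = (∑ i ∈ range j, (-1:ℝ)^(i+j+1) * F (face i (kt r j y)))
          + (((-1:ℝ)^(j+j+1) * F (face j (kt r j y)))
              + ((-1:ℝ)^(j+1+j+1) * F (face (j+1) (kt r j y))))
          + ∑ i ∈ Ico (j+2) (q+3), (-1:ℝ)^(i+j+1) * F (face i (kt r j y)) := by
    intro j hj
    exact split4 _ (by simp at hj; omega)
  rw [sum_congr rfl hsplit, sum_add_distrib, sum_add_distrib]
  have hSD : ∑ j ∈ range (q+2),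
      (((-1:ℝ)^(j+j+1) * F (face j (kt r j y)))
        + ((-1:ℝ)^(j+1+j+1) * F (face (j+1) (kt r j y))))
      = F (dt r (q+2) y) - F y := by
    have e : ∀ j ∈ range (q+2),
        (((-1:ℝ)^(j+j+1) * F (face j (kt r j y)))
          + ((-1:ℝ)^(j+1+j+1) * F (face (j+1) (kt r j y))))
        = F (dt r (j+1) y) - F (dt r j y) := by
      intro j _
      rw [face_kt_eq, face_kt_succ]
      have s1 : (-1:ℝ)^(j+j+1) = -1 := by
        rw [show j+j+1 = 2*j+1 by ring, pow_succ, pow_mul]; norm_num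
      have s2 : (-1:ℝ)^(j+1+j+1) = 1 := by
        rw [show j+1+j+1 = 2*(j+1) by ring, pow_mul]; norm_num
      rw [s1, s2]; ring
    rw [sum_congr rfl e, sum_range_sub (fun j => F (dt r j y)) (q+2), dt_zero]
  have hSL : ∑ j ∈ range (q+2), ∑ i ∈ range j, (-1:ℝ)^(i+j+1) * F (face i (kt r j y))
      = - ∑ j ∈ range (q+1), ∑ i ∈ range (j+1), a i j := by
    rw [sum_range_succ' (fun j => ∑ i ∈ range j, (-1:ℝ)^(i+j+1) * F (face i (kt r j y))) (q+1)]
    simp only [range_zero, sum_empty, add_zero]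
    rw [← Finset.sum_neg_distrib]
    apply sum_congr rfl
    intro j hj
    rw [← Finset.sum_neg_distrib]
    apply sum_congr rfl
    intro i hi
    simp only [mem_range] at hi
    rw [face_kt_of_lt r y (show i < j + 1 by omega)]
    simp only [ha, Nat.add_sub_cancel]
    rw [show i+(j+1)+1 = (i+j+1)+1 by ring, pow_succ]
    ring
  have hSU : ∑ j ∈ range (q+2), ∑ i ∈ Ico (j+2) (q+3), (-1:ℝ)^(i+j+1) * F (face i (kt r j y))
      = - ∑ j ∈ range (q+1), ∑ i ∈ Ico (j+1) (q+2), a i j := by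
    have e : ∀ j ∈ range (q+2),
        ∑ i ∈ Ico (j+2) (q+3), (-1:ℝ)^(i+j+1) * F (face i (kt r j y))
          = - ∑ i ∈ Ico (j+1) (q+2), a i j := by
      intro j hj
      rw [sum_Ico_eq_sum_range, sum_Ico_eq_sum_range, ← Finset.sum_neg_distrib,
        show q+3-(j+2) = q+2-(j+1) by omega]
      apply sum_congr rfl
      intro k hk
      rw [face_kt_of_gt r y (show j+1 < j+2+k by omega)]
      simp only [ha]
      rw [show j+2+k-1 = j+1+k by omega, show j+2+k+j+1 = (j+1+k+j+1)+1 by ring, pow_succ]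
      ring
    rw [sum_congr rfl e, ← Finset.sum_neg_distrib, sum_range_succ]
    simp [Finset.Ico_self]
  rw [hSD, hSL, hSU]
  have hS1 : ∑ i ∈ range (q+2), ∑ j ∈ range (q+1), a i j
      = (∑ j ∈ range (q+1), ∑ i ∈ range (j+1), a i j)
        + ∑ j ∈ range (q+1), ∑ i ∈ Ico (j+1) (q+2), a i j := by
    rw [sum_comm, ← sum_add_distrib]
    apply sum_congr rfl
    intro j hj
    simp only [mem_range] at hj
    exact split2 _ (by omega)
  rw [hS1]; ring

/-! ### Bridges between `Fin` tuples and ℕ-indexed tuples -/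

lemma succAbove_val {n : ℕ} (i : Fin (n+1)) (k : Fin n) :
    ((i.succAbove k : Fin (n+1)) : ℕ) = if (k:ℕ) < (i:ℕ) then (k:ℕ) else (k:ℕ)+1 := by
  rcases Nat.lt_or_ge (k:ℕ) (i:ℕ) with h | h
  · rw [Fin.succAbove_of_castSucc_lt _ _ (by simpa [Fin.lt_def] using h)]
    simp [h]
  · rw [Fin.succAbove_of_le_castSucc _ _ (by simpa [Fin.le_def] using h)]
    simp [Fin.val_succ, Nat.not_lt.2 h]

lemma comp_succAbove (y : ℕ → X) {m : ℕ} (i : Fin (m+1)) (k : Fin m) :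
    y ((i.succAbove k : Fin (m+1)) : ℕ) = face (i:ℕ) y (k:ℕ) := by
  rw [succAbove_val]
  simp only [face]
  split_ifs <;> rfl

lemma kTuple_eq (r : X → X) {m : ℕ} (y : ℕ → X) (j : Fin (m+1)) :
    kTuple r (fun k : Fin (m+1) => y (k:ℕ)) j = fun k : Fin (m+2) => kt r (j:ℕ) y (k:ℕ) := by
  funext k
  simp only [kTuple, kt]
  split_ifs <;> rfl

def ext' {m : ℕ} (x : Fin (m+1) → X) : ℕ → X :=
  fun n => if h : n < m+1 then x ⟨n, h⟩ else x 0

lemma ext'_apply {m : ℕ} (x : Fin (m+1) → X) (k : Fin (m+1)) : ext' x (k:ℕ) = x k := by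
  simp [ext']
  intro h; have := k.isLt; omega

lemma sgn1 (i j : ℕ) (c : ℝ) : (-1:ℝ)^i * ((-1:ℝ)^(j+1) * c) = (-1:ℝ)^(i+j+1) * c := by
  rw [show i+j+1 = i+(j+1) by omega, pow_add]; ring

lemma sgn2 (i j : ℕ) (c : ℝ) : (-1:ℝ)^(j+1) * ((-1:ℝ)^i * c) = (-1:ℝ)^(i+j+1) * c := by
  rw [show i+j+1 = i+(j+1) by omega, pow_add]; ring

/-! ### The homotopy formula -/

lemma homotopy (r : X → X) (q : ℕ) (φ : Cochain X (q+1)) :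
    delta (K r φ) + K r (delta φ) = pull r φ - φ := by
  funext x
  set y : ℕ → X := ext' x with hy
  set F : (ℕ → X) → ℝ := fun w => φ (fun k : Fin (q+2) => w (k:ℕ)) with hF
  have hx : (fun k : Fin (q+2) => y (k:ℕ)) = x := by
    funext k; exact ext'_apply x k
  have h1 : delta (K r φ) x
      = ∑ i ∈ range (q+2), ∑ j ∈ range (q+1), (-1:ℝ)^(i+j+1) * F (kt r j (face i y)) := by
    have step : ∀ i : Fin (q+2), (-1:ℝ)^(i:ℕ) * K r φ (fun j => x (i.succAbove j))
        = ∑ j ∈ range (q+1), (-1:ℝ)^((i:ℕ)+j+1) * F (kt r j (face (i:ℕ) y)) := by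
      intro i
      have htup : (fun k : Fin (q+1) => x (i.succAbove k))
          = fun k : Fin (q+1) => face (i:ℕ) y (k:ℕ) := by
        funext k
        rw [← comp_succAbove y i k, hy, ext'_apply]
      have e2 : ∀ j : Fin (q+1),
          φ (kTuple r (fun k : Fin (q+1) => face (i:ℕ) y (k:ℕ)) j)
            = F (kt r (j:ℕ) (face (i:ℕ) y)) := by
        intro j; rw [kTuple_eq]
      calc (-1:ℝ)^(i:ℕ) * K r φ (fun j => x (i.succAbove j))
          = ∑ j : Fin (q+1), (-1:ℝ)^((i:ℕ)+(j:ℕ)+1) * F (kt r (j:ℕ) (face (i:ℕ) y)) := by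
            rw [K, htup, mul_sum]
            refine Finset.sum_congr rfl fun j _ => ?_
            rw [e2 j, sgn1]
        _ = ∑ j ∈ range (q+1), (-1:ℝ)^((i:ℕ)+j+1) * F (kt r j (face (i:ℕ) y)) :=
            Fin.sum_univ_eq_sum_range (fun j => (-1:ℝ)^((i:ℕ)+j+1) * F (kt r j (face (i:ℕ) y))) (q+1)
    rw [delta, Finset.sum_congr rfl fun i _ => step i]
    exact Fin.sum_univ_eq_sum_range
      (fun i => ∑ j ∈ range (q+1), (-1:ℝ)^(i+j+1) * F (kt r j (face i y))) (q+2)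
  have h2 : K r (delta φ) x
      = ∑ j ∈ range (q+2), ∑ i ∈ range (q+3), (-1:ℝ)^(i+j+1) * F (face i (kt r j y)) := by
    have step : ∀ j : Fin (q+2), (-1:ℝ)^((j:ℕ)+1) * delta φ (kTuple r x j)
        = ∑ i ∈ range (q+3), (-1:ℝ)^(i+(j:ℕ)+1) * F (face i (kt r (j:ℕ) y)) := by
      intro j
      have htup : kTuple r x j = fun k : Fin (q+3) => kt r (j:ℕ) y (k:ℕ) := by
        rw [← hx, kTuple_eq]
      have e2 : ∀ i : Fin (q+3),
          φ (fun k : Fin (q+2) => kt r (j:ℕ) y ((i.succAbove k : Fin (q+3)) : ℕ))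
            = F (face (i:ℕ) (kt r (j:ℕ) y)) := by
        intro i
        simp only [hF]
        congr 1
        funext k
        exact comp_succAbove (kt r (j:ℕ) y) i k
      calc (-1:ℝ)^((j:ℕ)+1) * delta φ (kTuple r x j)
          = ∑ i : Fin (q+3), (-1:ℝ)^((i:ℕ)+(j:ℕ)+1) * F (face (i:ℕ) (kt r (j:ℕ) y)) := by
            rw [delta, htup, mul_sum]
            refine Finset.sum_congr rfl fun i _ => ?_
            rw [← e2 i, sgn2]
        _ = ∑ i ∈ range (q+3), (-1:ℝ)^(i+(j:ℕ)+1) * F (face i (kt r (j:ℕ) y)) :=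
            Fin.sum_univ_eq_sum_range (fun i => (-1:ℝ)^(i+(j:ℕ)+1) * F (face i (kt r (j:ℕ) y))) (q+3)
    rw [K, Finset.sum_congr rfl fun j _ => step j]
    exact Fin.sum_univ_eq_sum_range
      (fun j => ∑ i ∈ range (q+3), (-1:ℝ)^(i+j+1) * F (face i (kt r j y))) (q+2)
  have hend : F (dt r (q+2) y) = pull r φ x := by
    simp only [hF, pull]
    congr 1
    funext k
    have hk : (k:ℕ) < q+2 := k.isLt
    simp only [dt, if_pos hk]
    rw [hy]
    congr 1
    exact ext'_apply x k
  have hFy : F y = φ x := by rw [hF]; exact congrArg φ hx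
  rw [Pi.add_apply, h1, h2, sum_key F r y q, hend, hFy, Pi.sub_apply]

lemma homotopy0 (r : X → X) (φ : Cochain X 0) :
    K r (delta φ) = pull r φ - φ := by
  funext x
  have e1 : (fun j : Fin 1 => kTuple r x 0 ((0 : Fin 2).succAbove j)) = x := by
    funext j
    rw [Subsingleton.elim j 0]
    show kTuple r x 0 1 = x 0
    simp [kTuple]
  have e2 : (fun j : Fin 1 => kTuple r x 0 ((1 : Fin 2).succAbove j)) = fun i => r (x i) := by
    funext j
    rw [Subsingleton.elim j 0]
    show kTuple r x 0 0 = r (x 0)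
    simp [kTuple]
  have h1 : K r (delta φ) x = -(delta φ (kTuple r x 0)) := by
    rw [K, Fin.sum_univ_one]
    norm_num
  rw [h1, delta, Fin.sum_univ_two, e1, e2]
  simp [pull]
  ring

lemma K_zero (r : X → X) (q : ℕ) : K r (0 : Cochain X (q+1)) = 0 := by
  funext x; simp [K]

lemma delta_sub {q : ℕ} (a b : Cochain X q) : delta (a - b) = delta a - delta b := by
  funext x
  simp [delta, mul_sub, Finset.sum_sub_distrib]

end Aux

/-- If `G` acts on `X` on the right, `z ∈ X`, `i(g) = z·g` and `μ : X → G` is `G`-equivariant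
with `μ ∘ i = id`, then `i^*` is a morphism of cochain complexes (preserving invariant
cochains) which is a cochain homotopy equivalence with homotopy inverse `μ^*`:
`i^* ∘ μ^* = id`, `μ^* ∘ i^* = r^*` with `r = i ∘ μ`, and `δK + Kδ = r^* − id` where `K`
preserves invariant cochains; in particular `i^*` induces an isomorphism on the cohomology
`ker δ / im δ` of the invariant subcomplexes in every degree. -/
theorem restriction_is_homotopy_equivalence [Group G] (act : X → G → X)
    (hone : ∀ x : X, act x 1 = x)
    (hmul : ∀ (x : X) (g h : G), act (act x g) h = act x (g * h))
    (z : X) (μ : X → G)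
    (hμ : ∀ (x : X) (g : G), μ (act x g) = μ x * g)
    (hμi : ∀ g : G, μ (act z g) = g) :
    -- `i^*` is a chain map preserving invariant cochains
    ((∀ (q : ℕ) (φ : Cochain X q), iStar act z (delta φ) = delta (iStar act z φ)) ∧
     (∀ (q : ℕ) (φ : Cochain X q), InvX act φ → InvG (iStar act z φ))) ∧
    -- `μ^*` is a chain map preserving invariant cochains
    ((∀ (q : ℕ) (ψ : Cochain G q), muStar μ (delta ψ) = delta (muStar μ ψ)) ∧
     (∀ (q : ℕ) (ψ : Cochain G q), InvG ψ → InvX act (muStar μ ψ))) ∧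
    -- `i^* ∘ μ^* = id`
    (∀ (q : ℕ) (ψ : Cochain G q), iStar act z (muStar μ ψ) = ψ) ∧
    -- `μ^* ∘ i^* = r^*` with `r = i ∘ μ`
    (∀ (q : ℕ) (φ : Cochain X q),
        muStar μ (iStar act z φ) = pull (fun x => act z (μ x)) φ) ∧
    -- homotopy formula `δ∘K + K∘δ = r^* − id`
    ((∀ (q : ℕ) (φ : Cochain X (q + 1)),
        delta (K (fun x => act z (μ x)) φ) + K (fun x => act z (μ x)) (delta φ)
          = pull (fun x => act z (μ x)) φ - φ) ∧
      (∀ φ : Cochain X 0,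
        K (fun x => act z (μ x)) (delta φ) = pull (fun x => act z (μ x)) φ - φ)) ∧
    -- `K` preserves invariant cochains
    (∀ (q : ℕ) (φ : Cochain X (q + 1)),
        InvX act φ → InvX act (K (fun x => act z (μ x)) φ)) ∧
    -- `i^*` induces an isomorphism on cohomology of the invariant subcomplexes:
    -- surjectivity and injectivity on `ker δ / im δ`
    ((∀ (q : ℕ) (ψ : Cochain G q), InvG ψ → delta ψ = 0 →
        ∃ φ : Cochain X q, InvX act φ ∧ delta φ = 0 ∧ iStar act z φ = ψ) ∧
     (∀ (q : ℕ) (φ : Cochain X (q + 1)), InvX act φ → delta φ = 0 →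
        ∀ η : Cochain G q, InvG η → iStar act z φ = delta η →
          ∃ ξ : Cochain X q, InvX act ξ ∧ delta ξ = φ) ∧
     (∀ φ : Cochain X 0, InvX act φ → delta φ = 0 → iStar act z φ = 0 → φ = 0)) := by
  have inv_i : ∀ (q : ℕ) (φ : Cochain X q), InvX act φ → InvG (iStar act z φ) := by
    intro q φ hφ h g
    show φ (fun k => act z (g k * h)) = φ (fun k => act z (g k))
    rw [show (fun k : Fin (q+1) => act z (g k * h)) = fun k => act (act z (g k)) h from
      funext fun k => (hmul _ _ _).symm]
    exact hφ h (fun k => act z (g k))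
  have inv_mu : ∀ (q : ℕ) (ψ : Cochain G q), InvG ψ → InvX act (muStar μ ψ) := by
    intro q ψ hψ g x
    show ψ (fun k => μ (act (x k) g)) = ψ (fun k => μ (x k))
    rw [show (fun k : Fin (q+1) => μ (act (x k) g)) = fun k => μ (x k) * g from
      funext fun k => hμ _ _]
    exact hψ g _
  have retract : ∀ (q : ℕ) (ψ : Cochain G q), iStar act z (muStar μ ψ) = ψ := by
    intro q ψ
    funext g
    show ψ (fun k => μ (act z (g k))) = ψ g
    rw [show (fun k : Fin (q+1) => μ (act z (g k))) = g from funext fun k => hμi _]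
  have invK : ∀ (q : ℕ) (φ : Cochain X (q + 1)),
      InvX act φ → InvX act (K (fun x => act z (μ x)) φ) := by
    intro q φ hφ g x
    show (∑ j : Fin (q+1), (-1:ℝ)^((j:ℕ)+1) * φ (kTuple _ (fun k => act (x k) g) j)) = _
    refine Finset.sum_congr rfl fun j _ => ?_
    congr 1
    have ht : kTuple (fun w => act z (μ w)) (fun k => act (x k) g) j
        = fun i => act (kTuple (fun w => act z (μ w)) x j i) g := by
      funext i
      simp only [kTuple]
      split_ifs with h
      · rw [hμ, ← hmul]
      · rfl
    rw [ht]
    exact hφ g (kTuple (fun w => act z (μ w)) x j)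
  refine ⟨⟨fun q φ => rfl, inv_i⟩, ⟨fun q ψ => rfl, inv_mu⟩, retract, fun q φ => rfl,
    ⟨fun q φ => homotopy _ q φ, fun φ => homotopy0 _ φ⟩, invK, ?_, ?_, ?_⟩
  · -- surjectivity on cohomology
    intro q ψ hψ hδ
    refine ⟨muStar μ ψ, inv_mu q ψ hψ, ?_, retract q ψ⟩
    have hz : muStar μ (0 : Cochain G (q+1)) = 0 := by funext x; simp [muStar]
    calc delta (muStar μ ψ) = muStar μ (delta ψ) := rfl
      _ = muStar μ 0 := by rw [hδ]
      _ = 0 := hz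
  · -- injectivity, positive degrees
    intro q φ hφ hδ η hη hiφ
    have hhom := homotopy (fun x => act z (μ x)) q φ
    rw [hδ, K_zero, add_zero] at hhom
    have hpull : pull (fun x => act z (μ x)) φ = delta (muStar μ η) := by
      have h1 : muStar μ (iStar act z φ) = pull (fun x => act z (μ x)) φ := rfl
      rw [← h1, hiφ]
      rfl
    refine ⟨muStar μ η - K (fun x => act z (μ x)) φ, ?_, ?_⟩
    · intro g x
      have ha := inv_mu q η hη g x
      have hb := invK q φ hφ g x
      show muStar μ η (fun k => act (x k) g) - K (fun x => act z (μ x)) φ (fun k => act (x k) g)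
          = muStar μ η x - K (fun x => act z (μ x)) φ x
      rw [ha, hb]
    · rw [delta_sub, ← hpull, hhom, sub_sub_cancel]
  · -- injectivity, degree 0
    intro φ hφ hδ h0
    have hhom := homotopy0 (fun x => act z (μ x)) φ
    rw [hδ, K_zero] at hhom
    have hp : pull (fun x => act z (μ x)) φ = 0 := by
      have h1 : muStar μ (iStar act z φ) = pull (fun x => act z (μ x)) φ := rfl
      rw [← h1, h0]
      funext x; simp [muStar]
    rw [hp, zero_sub] at hhom
    exact neg_eq_zero.mp hhom.symm



end Stmt1
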